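/- Let D=(V,A) be a finite digraph and let B_1 and B_2 be branchings in D partitioning A. Let R'_1, R'_2 ⊆ V be vertex sets such that R'_1 ∪ R'_2 = R(B_1) ∪ R(B_2) and R'_1 ∩ R'_2 = R(B_1) ∩ R(B_2). Then A can be partitioned into two branchings B'_1 and B'_2 with R(B'_1) = R'_1 and R(B'_2) = R'_2 if and only if |R'_1 ∩ X| ≥ 1 and |R'_2 ∩ X| ≥ 1 for each source component X of D. -/

import Mathlib

open Finset
open scoped Classical Pointwise

variable {V : Type*}

/-- The indegree `d⁻_B(v)` of the vertex `v` with respect to the arc set `B`,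
i.e. the number of arcs in `B` whose head is `v`. -/
noncomputable def inDeg (B : Finset (V × V)) (v : V) : ℕ :=
  (B.filter (fun a => a.2 = v)).card

/-- `B` is a branching of the digraph `D = (V, A)`: `B ⊆ A`, every vertex has
indegree at most `1` in `B`, and the underlying undirected edge set of `B` is a
forest (equivalently, every nonempty `X ⊆ V` induces at most `|X| - 1` arcs of `B`). -/
def IsBranching (A B : Finset (V × V)) : Prop :=
  B ⊆ A ∧ (∀ v : V, inDeg B v ≤ 1) ∧
    ∀ X : Finset V, X.Nonempty →
      (B.filter (fun a => a.1 ∈ X ∧ a.2 ∈ X)).card ≤ X.card - 1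

/-- `B` is a `b`-branching of the digraph `D = (V, A)`:
`B ⊆ A`, `d⁻_B(v) ≤ b(v)` for every vertex `v`, and
`|B[X]| ≤ b(X) - 1` for every nonempty `X ⊆ V`. -/
def IsBBranching (A : Finset (V × V)) (b : V → ℕ) (B : Finset (V × V)) : Prop :=
  B ⊆ A ∧ (∀ v : V, inDeg B v ≤ b v) ∧
    ∀ X : Finset V, X.Nonempty →
      (B.filter (fun a => a.1 ∈ X ∧ a.2 ∈ X)).card ≤ (∑ v ∈ X, b v) - 1

/-- Reachability along the arcs of `A`. -/
def Reaches (A : Finset (V × V)) : V → V → Prop :=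
  Relation.ReflTransGen (fun u v => (u, v) ∈ A)

/-- `X` is a source component of the digraph `D = (V, A)`: `X` is a strongly
connected component (the set of vertices mutually reachable with some vertex `v`)
and no arc of `A` enters `X` from outside. -/
def IsSourceComponent (A : Finset (V × V)) (X : Finset V) : Prop :=
  (∃ v : V, ∀ u : V, u ∈ X ↔ Reaches A u v ∧ Reaches A v u) ∧
    ∀ a ∈ A, a.2 ∈ X → a.1 ∈ X

/-- `∂B`: the set of heads of arcs of `B`. -/
noncomputable def heads (B : Finset (V × V)) : Finset V := B.image Prod.snd

/-- `R(B) = V \ ∂B`: the set of root vertices of a branching `B`. -/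
noncomputable def roots [Fintype V] (B : Finset (V × V)) : Finset V :=
  univ \ heads B

/-- The incidence vector in `ℝ^A` of an arc subset `B ⊆ A`. -/
noncomputable def incVec (A : Finset (V × V)) (B : Finset (V × V)) :
    {a : V × V // a ∈ A} → ℝ :=
  fun a => if a.1 ∈ B then 1 else 0

/-- no directed cycle -/
def NoCyc (B : Finset (V × V)) : Prop :=
  ∀ v : V, ¬ Relation.TransGen (fun x y => (x, y) ∈ B) v v

lemma mem_heads {B : Finset (V × V)} {v : V} : v ∈ heads B ↔ ∃ b ∈ B, b.2 = v := by
  simp [heads]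

lemma inDeg_eq_zero_of_not_mem_heads {B : Finset (V × V)} {v : V} (h : v ∉ heads B) :
    inDeg B v = 0 := by
  rw [inDeg, card_eq_zero, filter_eq_empty_iff]
  intro b hb hbv
  exact h (mem_heads.2 ⟨b, hb, hbv⟩)

lemma head_inj {B : Finset (V × V)} (hdeg : ∀ v, inDeg B v ≤ 1) {a b : V × V}
    (ha : a ∈ B) (hb : b ∈ B) (hab : a.2 = b.2) : a = b := by
  have h := hdeg b.2
  rw [inDeg] at h
  exact Finset.card_le_one.1 h a (mem_filter.2 ⟨ha, hab⟩) b (mem_filter.2 ⟨hb, rfl⟩)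

/-- an injection trick: if every `x ∈ X` has an in-arc within `X`, then
`X` induces at least `|X|` arcs of `B`. -/
lemma card_le_filter_of_pred {B : Finset (V × V)} {X : Finset V}
    (h : ∀ x ∈ X, ∃ w ∈ X, (w, x) ∈ B) :
    X.card ≤ (B.filter (fun a => a.1 ∈ X ∧ a.2 ∈ X)).card := by
  classical
  have h' : ∀ x, ∃ w, x ∈ X → (w ∈ X ∧ (w, x) ∈ B) := by
    intro x
    by_cases hx : x ∈ X
    · obtain ⟨w, hw1, hw2⟩ := h x hx
      exact ⟨w, fun _ => ⟨hw1, hw2⟩⟩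
    · exact ⟨x, fun hx' => absurd hx' hx⟩
  choose p hp using h'
  apply Finset.card_le_card_of_injOn (fun x => (p x, x))
  · intro x hx
    exact mem_filter.2 ⟨(hp x hx).2, (hp x hx).1, hx⟩
  · intro x _ y _ hxy
    exact (Prod.mk.injEq _ _ _ _ ▸ hxy).2

/-- forest condition implies no directed cycle -/
lemma noCyc_of_forest [Fintype V] {B : Finset (V × V)}
    (hX : ∀ X : Finset V, X.Nonempty →
      (B.filter (fun a => a.1 ∈ X ∧ a.2 ∈ X)).card ≤ X.card - 1) : NoCyc B := by
  intro v hv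
  set r : V → V → Prop := fun x y => (x, y) ∈ B with hr
  classical
  set X : Finset V := univ.filter (fun u => Relation.ReflTransGen r v u ∧
      Relation.ReflTransGen r u v) with hXdef
  have hmemX : ∀ u, u ∈ X ↔ Relation.ReflTransGen r v u ∧ Relation.ReflTransGen r u v := by
    intro u; simp [hXdef]
  have hvX : v ∈ X := (hmemX v).2 ⟨.refl, .refl⟩
  have key : ∀ u ∈ X, ∃ w ∈ X, (w, u) ∈ B := by
    intro u hu
    obtain ⟨h1, h2⟩ := (hmemX u).1 hu
    by_cases huv : u = v
    · subst huv
      obtain ⟨w, hw1, hw2⟩ := (Relation.TransGen.tail'_iff).1 hv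
      refine ⟨w, (hmemX w).2 ⟨hw1, Relation.ReflTransGen.single hw2⟩, hw2⟩
    · have h1' : Relation.TransGen r v u := by
        rcases (Relation.reflTransGen_iff_eq_or_transGen.1 h1) with h | h
        · exact absurd h huv
        · exact h
      obtain ⟨w, hw1, hw2⟩ := (Relation.TransGen.tail'_iff).1 h1'
      exact ⟨w, (hmemX w).2 ⟨hw1, Relation.ReflTransGen.trans (.single hw2) h2⟩, hw2⟩
  have hcard := hX X ⟨v, hvX⟩
  have := card_le_filter_of_pred key
  have hpos : 1 ≤ X.card := Finset.card_pos.2 ⟨v, hvX⟩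
  omega

/-- indeg ≤ 1 and no directed cycle imply forest condition -/
lemma forest_of_noCyc [Fintype V] {B : Finset (V × V)} (hdeg : ∀ v, inDeg B v ≤ 1)
    (hnc : NoCyc B) :
    ∀ X : Finset V, X.Nonempty →
      (B.filter (fun a => a.1 ∈ X ∧ a.2 ∈ X)).card ≤ X.card - 1 := by
  classical
  intro X hXne
  set r : V → V → Prop := fun x y => (x, y) ∈ B with hr
  set F := B.filter (fun a => a.1 ∈ X ∧ a.2 ∈ X) with hF
  have hx : ∃ x ∈ X, ∀ a ∈ F, a.2 ≠ x := by
    by_contra hcon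
    push_neg at hcon
    have hpre : ∀ x ∈ X, ∃ w ∈ X, (w, x) ∈ B := by
      intro x hx
      obtain ⟨a, haF, ha2⟩ := hcon x hx
      have := mem_filter.1 haF
      exact ⟨a.1, this.2.1, by rw [← ha2]; exact this.1⟩
    have hpre' : ∀ x, ∃ w, x ∈ X → (w ∈ X ∧ (w, x) ∈ B) := by
      intro x
      by_cases hx : x ∈ X
      · obtain ⟨w, hw1, hw2⟩ := hpre x hx
        exact ⟨w, fun _ => ⟨hw1, hw2⟩⟩
      · exact ⟨x, fun hx' => absurd hx' hx⟩
    choose f hf using hpre'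
    obtain ⟨x₀, hx₀⟩ := hXne
    have hfX : ∀ x ∈ X, f x ∈ X := fun x hx => (hf x hx).1
    have hfB : ∀ x ∈ X, (f x, x) ∈ B := fun x hx => (hf x hx).2
    have hiter : ∀ n, f^[n] x₀ ∈ X := by
      intro n
      induction n with
      | zero => simpa using hx₀
      | succ n ih => rw [Function.iterate_succ_apply']; exact hfX _ ih
    have hrtg : ∀ (d : ℕ) (x : V), x ∈ X → Relation.ReflTransGen r (f^[d] x) x := by
      intro d
      induction d with
      | zero => intro x _; simpa using Relation.ReflTransGen.refl
      | succ d ih =>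
        intro x hx
        rw [Function.iterate_succ_apply]
        exact Relation.ReflTransGen.trans (ih (f x) (hfX x hx))
          (Relation.ReflTransGen.single (hfB x hx))
    obtain ⟨i, j, hij, heq⟩ := Finite.exists_ne_map_eq_of_infinite (fun n : ℕ => f^[n] x₀)
    wlog hlt : i < j generalizing i j
    · exact this j i hij.symm heq.symm (by omega)
    have hd : f^[j - i] (f^[i] x₀) = f^[i] x₀ := by
      rw [← Function.iterate_add_apply]
      rw [show j - i + i = j by omega]
      exact heq.symm
    set x := f^[i] x₀ with hxdef
    have hxX : x ∈ X := hiter i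
    obtain ⟨e, he⟩ : ∃ e, j - i = e + 1 := ⟨j - i - 1, by omega⟩
    have hcyc : Relation.TransGen r (f^[e + 1] x) x := by
      rw [Function.iterate_succ_apply]
      exact Relation.TransGen.tail' (hrtg e (f x) (hfX x hxX)) (hfB x hxX)
    rw [← he, hd] at hcyc
    exact hnc x hcyc
  obtain ⟨x, hxX, hxnot⟩ := hx
  have himg : F.image Prod.snd ⊆ X.erase x := by
    intro y hy
    obtain ⟨a, haF, ha2⟩ := mem_image.1 hy
    refine mem_erase.2 ⟨?_, ?_⟩
    · rw [← ha2]; exact hxnot a haF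
    · rw [← ha2]; exact (mem_filter.1 haF).2.2
  have hinj : Set.InjOn Prod.snd (F : Set (V × V)) := by
    intro a ha b hb hab
    exact head_inj hdeg (mem_filter.1 ha).1 (mem_filter.1 hb).1 hab
  calc F.card = (F.image Prod.snd).card := (Finset.card_image_of_injOn hinj).symm
    _ ≤ (X.erase x).card := Finset.card_le_card himg
    _ = X.card - 1 := Finset.card_erase_of_mem hxX

lemma isBranching_iff [Fintype V] {A B : Finset (V × V)} :
    IsBranching A B ↔ B ⊆ A ∧ (∀ v, inDeg B v ≤ 1) ∧ NoCyc B := by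
  constructor
  · rintro ⟨h1, h2, h3⟩
    exact ⟨h1, h2, noCyc_of_forest h3⟩
  · rintro ⟨h1, h2, h3⟩
    exact ⟨h1, h2, forest_of_noCyc h2 h3⟩



lemma noCyc_insert {B : Finset (V × V)} {a : V × V} (hnc : NoCyc B)
    (hu : a.1 ∉ heads (insert a B)) : NoCyc (insert a B) := by
  set r' : V → V → Prop := fun x y => (x, y) ∈ insert a B with hr'
  set rB : V → V → Prop := fun x y => (x, y) ∈ B with hrB
  have hnotin : ∀ w x, r' w x → x ≠ a.1 := by
    intro w x hwx hx
    exact hu (by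
      rw [heads, mem_image]
      exact ⟨(w, x), hwx, hx⟩)
  have claim : ∀ x y, Relation.ReflTransGen r' x y →
      Relation.ReflTransGen rB x y ∨ Relation.ReflTransGen r' x a.1 := by
    intro x y hxy
    induction hxy using Relation.ReflTransGen.head_induction_on with
    | refl => exact Or.inl .refl
    | head h1 h2 ih =>
      rename_i s p
      rcases Finset.mem_insert.1 h1 with heq | hB
      · right
        have hs : s = a.1 := congrArg Prod.fst heq
        rw [hs]
      · rcases ih with h | h
        · exact Or.inl (Relation.ReflTransGen.head hB h)
        · exact Or.inr (Relation.ReflTransGen.head h1 h)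
  intro v hv
  obtain ⟨c, hvc, hcv⟩ := (Relation.TransGen.head'_iff).1 hv
  rcases claim c v hcv with h | h
  · rcases Finset.mem_insert.1 hvc with heq | hB
    · have hv1 : v = a.1 := congrArg Prod.fst heq
      rcases Relation.ReflTransGen.cases_tail h with h' | ⟨w, _, hw⟩
      · exact hnotin v c hvc (h' ▸ hv1)
      · exact hnotin w v (Finset.mem_insert.2 (Or.inr hw)) hv1
    · exact hnc v (Relation.TransGen.head' hB h)
  · have : Relation.TransGen r' v a.1 := Relation.TransGen.head' hvc h
    obtain ⟨w, _, hw⟩ := (Relation.TransGen.tail'_iff).1 this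
    exact hnotin w a.1 hw rfl


/-- number of arcs of `A` entering `X` -/
noncomputable def ent (A : Finset (V × V)) (X : Finset V) : ℕ :=
  (A.filter (fun a => a.2 ∈ X ∧ a.1 ∉ X)).card

/-- root requirement of `X` -/
noncomputable def req (R₁ R₂ X : Finset V) : ℕ :=
  (if (R₁ ∩ X).Nonempty then 0 else 1) + (if (R₂ ∩ X).Nonempty then 0 else 1)

lemma inter_union_nonempty {S X Y : Finset V} :
    (S ∩ (X ∪ Y)).Nonempty ↔ (S ∩ X).Nonempty ∨ (S ∩ Y).Nonempty := by
  constructor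
  · rintro ⟨x, hx⟩
    rw [mem_inter, mem_union] at hx
    rcases hx.2 with h | h
    · exact Or.inl ⟨x, mem_inter.2 ⟨hx.1, h⟩⟩
    · exact Or.inr ⟨x, mem_inter.2 ⟨hx.1, h⟩⟩
  · rintro (⟨x, hx⟩ | ⟨x, hx⟩) <;> rw [mem_inter] at hx
    · exact ⟨x, mem_inter.2 ⟨hx.1, mem_union_left _ hx.2⟩⟩
    · exact ⟨x, mem_inter.2 ⟨hx.1, mem_union_right _ hx.2⟩⟩

lemma inter_inter_nonempty {S X Y : Finset V} (h : (S ∩ (X ∩ Y)).Nonempty) :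
    (S ∩ X).Nonempty ∧ (S ∩ Y).Nonempty := by
  obtain ⟨x, hx⟩ := h
  rw [mem_inter, mem_inter] at hx
  exact ⟨⟨x, mem_inter.2 ⟨hx.1, hx.2.1⟩⟩, ⟨x, mem_inter.2 ⟨hx.1, hx.2.2⟩⟩⟩

lemma inter_nonempty_mono {S X Y : Finset V} (hXY : X ⊆ Y) (h : (S ∩ X).Nonempty) :
    (S ∩ Y).Nonempty := by
  obtain ⟨x, hx⟩ := h
  rw [mem_inter] at hx
  exact ⟨x, mem_inter.2 ⟨hx.1, hXY hx.2⟩⟩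

lemma ent_submod (A : Finset (V × V)) (X Y : Finset V) :
    ent A (X ∪ Y) + ent A (X ∩ Y) ≤ ent A X + ent A Y := by
  classical
  simp only [ent, Finset.card_filter]
  rw [← Finset.sum_add_distrib, ← Finset.sum_add_distrib]
  apply Finset.sum_le_sum
  intro a _
  by_cases h1 : a.2 ∈ X <;> by_cases h2 : a.2 ∈ Y <;> by_cases h3 : a.1 ∈ X <;>
    by_cases h4 : a.1 ∈ Y <;> simp [mem_union, mem_inter, h1, h2, h3, h4]

lemma insert_inter_nonempty {v : V} {R X : Finset V} :
    ((insert v R) ∩ X).Nonempty ↔ v ∈ X ∨ (R ∩ X).Nonempty := by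
  constructor
  · rintro ⟨x, hx⟩
    rw [mem_inter, mem_insert] at hx
    rcases hx.1 with h | h
    · exact Or.inl (h ▸ hx.2)
    · exact Or.inr ⟨x, mem_inter.2 ⟨h, hx.2⟩⟩
  · rintro (h | ⟨x, hx⟩)
    · exact ⟨v, mem_inter.2 ⟨mem_insert_self _ _, h⟩⟩
    · rw [mem_inter] at hx
      exact ⟨x, mem_inter.2 ⟨mem_insert_of_mem hx.1, hx.2⟩⟩

/-- if the cut condition fails after transferring `a`, there is a blocking tight set -/
lemma blocked {A : Finset (V × V)} {R₁ R₂ : Finset V} {a : V × V}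
    (hcut : ∀ X : Finset V, X.Nonempty → req R₁ R₂ X ≤ ent A X) (ha : a ∈ A)
    (hbad : ¬ ∀ X : Finset V, X.Nonempty →
      req (insert a.2 R₁) R₂ X ≤ ent (A.erase a) X) :
    ∃ Y : Finset V, (R₁ ∩ Y).Nonempty ∧ a.2 ∈ Y ∧ a.1 ∉ Y ∧ ent A Y = req R₁ R₂ Y := by
  classical
  push_neg at hbad
  obtain ⟨X, hXne, hlt⟩ := hbad
  have hfe : ∀ P : V × V → Prop, ent (A.erase a) X =
      ((A.filter (fun b => b.2 ∈ X ∧ b.1 ∉ X)).erase a).card := by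
    intro _
    rw [ent, Finset.filter_erase]
  have hcutX := hcut X hXne
  by_cases hent : a.2 ∈ X ∧ a.1 ∉ X
  · -- a enters X
    have hmem : a ∈ A.filter (fun b => b.2 ∈ X ∧ b.1 ∉ X) := mem_filter.2 ⟨ha, hent⟩
    have he : ent (A.erase a) X = ent A X - 1 := by
      rw [hfe (fun b => b.2 ∈ X ∧ b.1 ∉ X), Finset.card_erase_of_mem hmem]; rfl
    have hpos : 1 ≤ ent A X := Finset.card_pos.2 ⟨a, hmem⟩
    have hR1term : ((insert a.2 R₁) ∩ X).Nonempty := insert_inter_nonempty.2 (Or.inl hent.1)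
    by_cases hR1X : (R₁ ∩ X).Nonempty
    · -- tight
      have hreq : req (insert a.2 R₁) R₂ X = req R₁ R₂ X := by
        rw [req, req, if_pos hR1term, if_pos hR1X]
      refine ⟨X, hR1X, hent.1, hent.2, ?_⟩
      rw [he, hreq] at hlt
      omega
    · have hreq : req (insert a.2 R₁) R₂ X + 1 = req R₁ R₂ X := by
        rw [req, req, if_pos hR1term, if_neg hR1X]
        split_ifs <;> omega
      rw [he] at hlt
      omega
  · -- a does not enter X
    have he : ent (A.erase a) X = ent A X := by
      rw [hfe (fun b => b.2 ∈ X ∧ b.1 ∉ X), Finset.erase_eq_of_notMem, ent]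
      intro hmem
      exact hent (mem_filter.1 hmem).2
    have hreq : req (insert a.2 R₁) R₂ X ≤ req R₁ R₂ X := by
      rw [req, req]
      by_cases h1 : (R₁ ∩ X).Nonempty
      · rw [if_pos h1, if_pos (insert_inter_nonempty.2 (Or.inr h1))]
      · rw [if_neg h1]
        split_ifs <;> omega
    omega

/-- existence of a good arc -/
lemma exists_good_arc [Fintype V] {A : Finset (V × V)} {R₁ R₂ : Finset V}
    (hcut : ∀ X : Finset V, X.Nonempty → req R₁ R₂ X ≤ ent A X) (hR : R₁ ≠ univ) :
    ∃ a ∈ A, a.1 ∈ R₁ ∧ a.2 ∉ R₁ ∧ ∀ X : Finset V, X.Nonempty →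
      req (insert a.2 R₁) R₂ X ≤ ent (A.erase a) X := by
  classical
  set F : Finset (Finset V) := univ.filter
    (fun X => (R₁ ∩ X).Nonempty ∧ (X \ R₁).Nonempty ∧ ent A X = req R₁ R₂ X) with hFdef
  by_cases hF : F.Nonempty
  · obtain ⟨X, hXF, hmin⟩ := F.exists_min_image card hF
    obtain ⟨hXR₁, hXmR₁, hXtight⟩ := (mem_filter.1 hXF).2
    have hXne : X.Nonempty := by
      obtain ⟨x, hx⟩ := hXR₁; exact ⟨x, (mem_inter.1 hx).2⟩
    -- req (X \ R₁) ≥ req X + 1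
    have h1 : req R₁ R₂ X + 1 ≤ req R₁ R₂ (X \ R₁) := by
      rw [req, req]
      have he : ¬ (R₁ ∩ (X \ R₁)).Nonempty := by
        rintro ⟨x, hx⟩
        rw [mem_inter, mem_sdiff] at hx
        exact hx.2.2 hx.1
      have hmono : (R₂ ∩ (X \ R₁)).Nonempty → (R₂ ∩ X).Nonempty :=
        inter_nonempty_mono (sdiff_subset)
      rw [if_pos hXR₁, if_neg he]
      by_cases g : (R₂ ∩ (X \ R₁)).Nonempty
      · rw [if_pos g, if_pos (hmono g)]
      · rw [if_neg g]
        split_ifs <;> omega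
    have h2 := hcut (X \ R₁) hXmR₁
    -- counting
    have h3 : ent A (X \ R₁) ≤ ent A X +
        (A.filter (fun a => a.1 ∈ X ∩ R₁ ∧ a.2 ∈ X \ R₁)).card := by
      have hsub : A.filter (fun a => a.2 ∈ X \ R₁ ∧ a.1 ∉ X \ R₁) ⊆
          A.filter (fun a => a.2 ∈ X ∧ a.1 ∉ X) ∪
          A.filter (fun a => a.1 ∈ X ∩ R₁ ∧ a.2 ∈ X \ R₁) := by
        intro b hb
        obtain ⟨hbA, hb2, hb1⟩ := mem_filter.1 hb
        by_cases hbX : b.1 ∈ X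
        · refine mem_union_right _ (mem_filter.2 ⟨hbA, mem_inter.2 ⟨hbX, ?_⟩, hb2⟩)
          by_contra hbR
          exact hb1 (mem_sdiff.2 ⟨hbX, hbR⟩)
        · exact mem_union_left _ (mem_filter.2 ⟨hbA, (mem_sdiff.1 hb2).1, hbX⟩)
      calc ent A (X \ R₁) ≤ (A.filter (fun a => a.2 ∈ X ∧ a.1 ∉ X) ∪
            A.filter (fun a => a.1 ∈ X ∩ R₁ ∧ a.2 ∈ X \ R₁)).card :=
          Finset.card_le_card hsub
        _ ≤ _ := Finset.card_union_le _ _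
    have hcard : 1 ≤ (A.filter (fun a => a.1 ∈ X ∩ R₁ ∧ a.2 ∈ X \ R₁)).card := by omega
    obtain ⟨a, haf⟩ := Finset.card_pos.1 hcard
    obtain ⟨haA, ha1, ha2⟩ := mem_filter.1 haf
    refine ⟨a, haA, (mem_inter.1 ha1).2, (mem_sdiff.1 ha2).2, ?_⟩
    by_contra hbad
    obtain ⟨Y, hYR₁, hvY, huY, hYtight⟩ := blocked hcut haA hbad
    set Z₁ := X ∩ Y with hZ₁
    set Z₂ := X ∪ Y with hZ₂
    have hZ₁ne : Z₁.Nonempty := ⟨a.2, mem_inter.2 ⟨(mem_sdiff.1 ha2).1, hvY⟩⟩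
    have hZ₂ne : Z₂.Nonempty := hXne.mono subset_union_left
    have hc1 := hcut Z₁ hZ₁ne
    have hc2 := hcut Z₂ hZ₂ne
    have hsubm : ent A Z₂ + ent A Z₁ ≤ ent A X + ent A Y := ent_submod A X Y
    have hYne : Y.Nonempty := ⟨a.2, hvY⟩
    -- R₂ supermodularity
    have hr2 : (if (R₂ ∩ X).Nonempty then 0 else 1) + (if (R₂ ∩ Y).Nonempty then 0 else 1) ≤
        (if (R₂ ∩ Z₁).Nonempty then 0 else 1) + (if (R₂ ∩ Z₂).Nonempty then 0 else 1) := by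
      have hu := inter_union_nonempty (S := R₂) (X := X) (Y := Y)
      have hi := inter_inter_nonempty (S := R₂) (X := X) (Y := Y)
      rw [hZ₁, hZ₂]
      clear * - hu hi
      split_ifs with g1 g2 g3 g4 g3 g4 g4 <;> first | omega | tauto
    have hZ₂R₁ : (R₁ ∩ Z₂).Nonempty := inter_nonempty_mono subset_union_left hXR₁
    by_cases hZ₁R₁ : (R₁ ∩ Z₁).Nonempty
    · -- Z₁ ∈ F, contradiction with minimality
      have hsupm : req R₁ R₂ X + req R₁ R₂ Y ≤ req R₁ R₂ Z₁ + req R₁ R₂ Z₂ := by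
        rw [req, req, req, req, if_pos hXR₁, if_pos hYR₁, if_pos hZ₁R₁, if_pos hZ₂R₁]
        omega
      have htZ₁ : ent A Z₁ = req R₁ R₂ Z₁ := by omega
      have hZ₁F : Z₁ ∈ F := by
        rw [hFdef, mem_filter]
        exact ⟨mem_univ _, hZ₁R₁, ⟨a.2, mem_sdiff.2 ⟨mem_inter.2
          ⟨(mem_sdiff.1 ha2).1, hvY⟩, (mem_sdiff.1 ha2).2⟩⟩, htZ₁⟩
      have hlt : Z₁.card < X.card := by
        apply Finset.card_lt_card
        constructor
        · exact inter_subset_left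
        · intro hXZ
          exact huY (mem_inter.1 (hXZ (mem_inter.1 ha1).1)).2
      have := hmin Z₁ hZ₁F
      omega
    · -- strict supermodularity, contradiction
      have hsupm : req R₁ R₂ X + req R₁ R₂ Y + 1 ≤ req R₁ R₂ Z₁ + req R₁ R₂ Z₂ := by
        rw [req, req, req, req, if_pos hXR₁, if_pos hYR₁, if_neg hZ₁R₁, if_pos hZ₂R₁]
        omega
      omega
  · -- F empty : any candidate arc works
    have hX₀ne : (univ \ R₁).Nonempty := by
      rw [sdiff_nonempty]
      intro h
      exact hR (subset_antisymm (subset_univ _) h)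
    have hcut₀ := hcut (univ \ R₁) hX₀ne
    have hreq₀ : 1 ≤ req R₁ R₂ (univ \ R₁) := by
      rw [req]
      have : ¬ (R₁ ∩ (univ \ R₁)).Nonempty := by
        rintro ⟨x, hx⟩
        rw [mem_inter, mem_sdiff] at hx
        exact hx.2.2 hx.1
      rw [if_neg this]
      omega
    have : 1 ≤ ent A (univ \ R₁) := by omega
    obtain ⟨a, haf⟩ := Finset.card_pos.1 this
    obtain ⟨haA, ha2, ha1⟩ := mem_filter.1 haf
    have ha1' : a.1 ∈ R₁ := by
      by_contra h
      exact ha1 (mem_sdiff.2 ⟨mem_univ _, h⟩)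
    have ha2' : a.2 ∉ R₁ := (mem_sdiff.1 ha2).2
    refine ⟨a, haA, ha1', ha2', ?_⟩
    by_contra hbad
    obtain ⟨Y, hYR₁, hvY, huY, hYtight⟩ := blocked hcut haA hbad
    exact hF ⟨Y, by
      rw [hFdef, mem_filter]
      exact ⟨mem_univ _, hYR₁, ⟨a.2, mem_sdiff.2 ⟨hvY, ha2'⟩⟩, hYtight⟩⟩

lemma noCyc_empty : NoCyc (∅ : Finset (V × V)) := by
  intro v hv
  cases hv with
  | single h => exact absurd h (notMem_empty _)
  | tail _ h => exact absurd h (notMem_empty _)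

/-- closed sets contain a source component -/
lemma closed_source [Fintype V] (A : Finset (V × V)) :
    ∀ (n : ℕ) (X : Finset V), X.card ≤ n → X.Nonempty →
      (∀ a ∈ A, a.2 ∈ X → a.1 ∈ X) →
      ∃ Y : Finset V, IsSourceComponent A Y ∧ Y ⊆ X := by
  intro n
  induction n with
  | zero =>
    intro X hc hne _
    have := Finset.card_pos.2 hne
    omega
  | succ n ih =>
    intro X hc hne hclosed
    obtain ⟨x, hx⟩ := hne
    have hreach_closed : ∀ u y, y ∈ X → Reaches A u y → u ∈ X := by
      intro u y hy hr
      induction hr using Relation.ReflTransGen.head_induction_on with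
      | refl => exact hy
      | head h1 _ ih2 => exact hclosed _ h1 ih2
    set Y : Finset V := univ.filter (fun u => Reaches A u x ∧ Reaches A x u) with hY
    have hmemY : ∀ u, u ∈ Y ↔ Reaches A u x ∧ Reaches A x u := by
      intro u; simp [hY]
    have hYX : Y ⊆ X := fun u hu => hreach_closed u x hx ((hmemY u).1 hu).1
    by_cases hsc : ∀ a ∈ A, a.2 ∈ Y → a.1 ∈ Y
    · exact ⟨Y, ⟨⟨x, hmemY⟩, hsc⟩, hYX⟩
    · push_neg at hsc
      obtain ⟨a0, ha0A, ha02, ha01⟩ := hsc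
      set X' : Finset V := (univ.filter (fun u => Reaches A u x)) \ Y with hX'
      have hmemX' : ∀ u, u ∈ X' ↔ Reaches A u x ∧ u ∉ Y := by
        intro u
        rw [hX', mem_sdiff, mem_filter]
        simp
      have ha0X' : a0.1 ∈ X' := by
        refine (hmemX' a0.1).2 ⟨?_, ha01⟩
        exact Relation.ReflTransGen.head ha0A ((hmemY a0.2).1 ha02).1
      have hX'X : X' ⊆ X := fun u hu => hreach_closed u x hx ((hmemX' u).1 hu).1
      have hX'closed : ∀ a ∈ A, a.2 ∈ X' → a.1 ∈ X' := by
        intro a haA ha2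
        obtain ⟨hr, hnY⟩ := (hmemX' a.2).1 ha2
        refine (hmemX' a.1).2 ⟨Relation.ReflTransGen.head haA hr, ?_⟩
        intro h1Y
        apply hnY
        exact (hmemY a.2).2 ⟨hr, Relation.ReflTransGen.tail ((hmemY a.1).1 h1Y).2 haA⟩
      have hcard' : X'.card ≤ n := by
        have hxY : x ∈ Y := (hmemY x).2 ⟨Relation.ReflTransGen.refl, Relation.ReflTransGen.refl⟩
        have hxX' : x ∉ X' := fun h => ((hmemX' x).1 h).2 hxY
        have hss : X' ⊂ X := (Finset.ssubset_iff_of_subset hX'X).2 ⟨x, hx, hxX'⟩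
        have := Finset.card_lt_card hss
        omega
      obtain ⟨Y', hY'1, hY'2⟩ := ih X' hcard' ⟨a0.1, ha0X'⟩ hX'closed
      exact ⟨Y', hY'1, hY'2.trans hX'X⟩

lemma heads_insert {B : Finset (V × V)} {a : V × V} :
    heads (insert a B) = insert a.2 (heads B) := by
  rw [heads, heads, Finset.image_insert]

lemma card_eq_card_heads {B : Finset (V × V)} (hdeg : ∀ v, inDeg B v ≤ 1) :
    B.card = (heads B).card := by
  rw [heads]
  refine (Finset.card_image_of_injOn ?_).symm
  intro a ha b hb hab
  exact head_inj hdeg ha hb hab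

/-- extend a partial solution by one good arc -/
lemma augment [Fintype V] {A B : Finset (V × V)} {R : Finset V} {a : V × V}
    (ha : a ∈ A) (hu1 : a.1 ∈ R) (hv : a.2 ∉ R)
    (hBsub : B ⊆ A.erase a) (hdeg : ∀ w, inDeg B w ≤ 1) (hnc : NoCyc B)
    (hh : heads B = univ \ insert a.2 R) :
    insert a B ⊆ A ∧ (∀ w, inDeg (insert a B) w ≤ 1) ∧ NoCyc (insert a B) ∧
      heads (insert a B) = univ \ R := by
  have haB : a ∉ B := fun h => (Finset.notMem_erase a A) (hBsub h)
  have hheads : heads (insert a B) = univ \ R := by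
    rw [heads_insert, hh]
    ext x
    simp only [mem_insert, mem_sdiff, mem_univ, true_and]
    constructor
    · rintro (rfl | h)
      · exact hv
      · exact fun hx => h (Or.inr hx)
    · intro hx
      by_cases hxa : x = a.2
      · exact Or.inl hxa
      · exact Or.inr (fun h => h.elim hxa hx)
  refine ⟨insert_subset ha (hBsub.trans (erase_subset a A)), ?_, ?_, hheads⟩
  · intro w
    by_cases hw : a.2 = w
    · rw [inDeg, Finset.filter_insert, if_pos hw,
        card_insert_of_notMem (fun h => haB (mem_filter.1 h).1)]
      have h0 : inDeg B w = 0 := by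
        apply inDeg_eq_zero_of_not_mem_heads
        rw [hh, mem_sdiff]
        intro hcon
        exact hcon.2 (hw ▸ mem_insert_self a.2 R)
      rw [inDeg] at h0
      omega
    · rw [inDeg, Finset.filter_insert, if_neg hw]
      exact hdeg w
  · apply noCyc_insert hnc
    rw [hheads, mem_sdiff]
    intro hcon
    exact hcon.2 hu1

lemma req_comm (R₁ R₂ X : Finset V) : req R₁ R₂ X = req R₂ R₁ X := by
  rw [req, req, Nat.add_comm]

/-- Edmonds' disjoint branchings theorem for two prescribed root sets -/
lemma edmonds2 [Fintype V] :
    ∀ (n : ℕ) (A : Finset (V × V)) (R₁ R₂ : Finset V),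
      (univ \ R₁).card + (univ \ R₂).card ≤ n →
      (∀ X : Finset V, X.Nonempty → req R₁ R₂ X ≤ ent A X) →
      ∃ B₁ B₂ : Finset (V × V), B₁ ⊆ A ∧ B₂ ⊆ A ∧ Disjoint B₁ B₂ ∧
        (∀ v, inDeg B₁ v ≤ 1) ∧ (∀ v, inDeg B₂ v ≤ 1) ∧ NoCyc B₁ ∧ NoCyc B₂ ∧
        heads B₁ = univ \ R₁ ∧ heads B₂ = univ \ R₂ := by
  intro n
  induction n with
  | zero =>
    intro A R₁ R₂ hn _
    have h1 : univ \ R₁ = ∅ := card_eq_zero.1 (by omega)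
    have h2 : univ \ R₂ = ∅ := card_eq_zero.1 (by omega)
    exact ⟨∅, ∅, empty_subset _, empty_subset _, disjoint_empty_left _,
      fun v => by simp [inDeg], fun v => by simp [inDeg], noCyc_empty, noCyc_empty,
      by rw [heads, image_empty, h1], by rw [heads, image_empty, h2]⟩
  | succ n ih =>
    intro A R₁ R₂ hn hcut
    by_cases h1 : R₁ = univ
    · by_cases h2 : R₂ = univ
      · exact ⟨∅, ∅, empty_subset _, empty_subset _, disjoint_empty_left _,
          fun v => by simp [inDeg], fun v => by simp [inDeg], noCyc_empty, noCyc_empty,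
          by rw [heads, image_empty, h1, sdiff_self]; rfl,
          by rw [heads, image_empty, h2, sdiff_self]; rfl⟩
      · -- step on R₂
        have hcut' : ∀ X : Finset V, X.Nonempty → req R₂ R₁ X ≤ ent A X := by
          intro X hX
          rw [req_comm]
          exact hcut X hX
        obtain ⟨a, haA, hu1, hv, hstep⟩ := exists_good_arc hcut' h2
        have hmem2 : a.2 ∈ univ \ R₂ := mem_sdiff.2 ⟨mem_univ _, hv⟩
        have hsd : univ \ insert a.2 R₂ = (univ \ R₂).erase a.2 := by
          rw [Finset.sdiff_insert]
        have hmeas : (univ \ R₁).card + (univ \ insert a.2 R₂).card ≤ n := by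
          rw [hsd, Finset.card_erase_of_mem hmem2]
          have : 1 ≤ (univ \ R₂).card := Finset.card_pos.2 ⟨a.2, hmem2⟩
          omega
        have hcut'' : ∀ X : Finset V, X.Nonempty →
            req R₁ (insert a.2 R₂) X ≤ ent (A.erase a) X := by
          intro X hX
          rw [req_comm]
          exact hstep X hX
        obtain ⟨B₁, B₂, hs1, hs2, hdisj, hd1, hd2, hn1, hn2, hh1, hh2⟩ :=
          ih (A.erase a) R₁ (insert a.2 R₂) hmeas hcut''
        obtain ⟨hsub, hdeg, hnc, hh⟩ := augment haA hu1 hv hs2 hd2 hn2 hh2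
        refine ⟨B₁, insert a B₂, hs1.trans (erase_subset _ _), hsub, ?_, hd1, hdeg,
          hn1, hnc, hh1, hh⟩
        rw [Finset.disjoint_insert_right]
        exact ⟨fun h => Finset.notMem_erase a A (hs1 h), hdisj⟩
    · -- step on R₁
      obtain ⟨a, haA, hu1, hv, hstep⟩ := exists_good_arc hcut h1
      have hmem2 : a.2 ∈ univ \ R₁ := mem_sdiff.2 ⟨mem_univ _, hv⟩
      have hsd : univ \ insert a.2 R₁ = (univ \ R₁).erase a.2 := by
        rw [Finset.sdiff_insert]
      have hmeas : (univ \ insert a.2 R₁).card + (univ \ R₂).card ≤ n := by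
        rw [hsd, Finset.card_erase_of_mem hmem2]
        have : 1 ≤ (univ \ R₁).card := Finset.card_pos.2 ⟨a.2, hmem2⟩
        omega
      obtain ⟨B₁, B₂, hs1, hs2, hdisj, hd1, hd2, hn1, hn2, hh1, hh2⟩ :=
        ih (A.erase a) (insert a.2 R₁) R₂ hmeas hstep
      obtain ⟨hsub, hdeg, hnc, hh⟩ := augment haA hu1 hv hs1 hd1 hn1 hh1
      refine ⟨insert a B₁, B₂, hsub, hs2.trans (erase_subset _ _), ?_, hdeg, hd2,
        hnc, hn2, hh, hh2⟩
      rw [Finset.disjoint_insert_left]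
      exact ⟨fun h => Finset.notMem_erase a A (hs2 h), hdisj⟩

/-- a branching all of whose heads cover `X` has an arc entering `X` -/
lemma exists_entering {A B : Finset (V × V)} {X : Finset V} (hb : IsBranching A B)
    (hXne : X.Nonempty) (hXh : ∀ x ∈ X, x ∈ heads B) :
    ∃ b ∈ B, b.2 ∈ X ∧ b.1 ∉ X := by
  by_contra h
  push_neg at h
  have hpred : ∀ x ∈ X, ∃ w ∈ X, (w, x) ∈ B := by
    intro x hx
    obtain ⟨b, hbB, hb2⟩ := mem_heads.1 (hXh x hx)
    refine ⟨b.1, h b hbB (hb2.symm ▸ hx), ?_⟩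
    rw [← hb2]
    exact hbB
  have hle := card_le_filter_of_pred hpred
  have h2 := hb.2.2 X hXne
  have h3 : 1 ≤ X.card := Finset.card_pos.2 hXne
  omega
/-- a branching has a root in every source component -/
lemma source_meets [Fintype V] {A B : Finset (V × V)} {X : Finset V}
    (hb : IsBranching A B) (hX : IsSourceComponent A X) (hXne : X.Nonempty) :
    1 ≤ (roots B ∩ X).card := by
  refine Finset.card_pos.2 ?_
  by_contra hne
  rw [Finset.not_nonempty_iff_eq_empty] at hne
  have hXh : ∀ x ∈ X, x ∈ heads B := by
    intro x hx
    by_contra hh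
    have : x ∈ roots B ∩ X := mem_inter.2 ⟨mem_sdiff.2 ⟨mem_univ _, hh⟩, hx⟩
    rw [hne] at this
    exact notMem_empty _ this
  obtain ⟨b, hbB, hb2, hb1⟩ := exists_entering hb hXne hXh
  exact hb1 (hX.2 b (hb.1 hbB) hb2)

/-- Schrijver. Let `B₁, B₂` be branchings partitioning `A`,
and let `R₁', R₂'` satisfy `R₁' ∪ R₂' = R(B₁) ∪ R(B₂)` and
`R₁' ∩ R₂' = R(B₁) ∩ R(B₂)`. Then `A` can be partitioned into branchings with
root sets `R₁'` and `R₂'` iff every source component meets both `R₁'` and `R₂'`. -/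
theorem branching_partition_prescribed_roots
    {V : Type*} [Fintype V] (A B₁ B₂ : Finset (V × V))
    (h₁ : IsBranching A B₁) (h₂ : IsBranching A B₂)
    (hd : Disjoint B₁ B₂) (hu : B₁ ∪ B₂ = A)
    (R₁' R₂' : Finset V)
    (hcup : R₁' ∪ R₂' = roots B₁ ∪ roots B₂)
    (hcap : R₁' ∩ R₂' = roots B₁ ∩ roots B₂) :
    (∃ B₁' B₂' : Finset (V × V),
      IsBranching A B₁' ∧ IsBranching A B₂' ∧ Disjoint B₁' B₂' ∧ B₁' ∪ B₂' = A ∧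
      roots B₁' = R₁' ∧ roots B₂' = R₂') ↔
    ∀ X : Finset V, IsSourceComponent A X →
      1 ≤ (R₁' ∩ X).card ∧ 1 ≤ (R₂' ∩ X).card := by
  classical
  constructor
  · rintro ⟨B₁', B₂', hb1, hb2, _, _, hr1, hr2⟩ X hX
    have hXne : X.Nonempty := by
      obtain ⟨v, hv⟩ := hX.1
      exact ⟨v, (hv v).2 ⟨Relation.ReflTransGen.refl, Relation.ReflTransGen.refl⟩⟩
    exact ⟨hr1 ▸ source_meets hb1 hX hXne, hr2 ▸ source_meets hb2 hX hXne⟩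
  · intro hsrc
    -- the cut condition
    have hcut : ∀ X : Finset V, X.Nonempty → req R₁' R₂' X ≤ ent A X := by
      intro X hXne
      have hkey : (¬ (R₁' ∩ X).Nonempty ∨ ¬ (R₂' ∩ X).Nonempty) → 1 ≤ ent A X := by
        intro hor
        by_contra hent
        have h0 : ent A X = 0 := by omega
        have hclosed : ∀ a ∈ A, a.2 ∈ X → a.1 ∈ X := by
          intro a haA h2
          by_contra hh1
          have hmem : a ∈ A.filter (fun a => a.2 ∈ X ∧ a.1 ∉ X) :=
            mem_filter.2 ⟨haA, h2, hh1⟩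
          rw [ent, card_eq_zero] at h0
          rw [h0] at hmem
          exact notMem_empty _ hmem
        obtain ⟨Y, hY, hYX⟩ := closed_source A X.card X le_rfl hXne hclosed
        obtain ⟨c1, c2⟩ := hsrc Y hY
        rcases hor with h | h
        · exact h (inter_nonempty_mono hYX (Finset.card_pos.1 c1))
        · exact h (inter_nonempty_mono hYX (Finset.card_pos.1 c2))
      rw [req]
      by_cases e1 : (R₁' ∩ X).Nonempty <;> by_cases e2 : (R₂' ∩ X).Nonempty
      · rw [if_pos e1, if_pos e2]
        omega
      · rw [if_pos e1, if_neg e2]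
        have := hkey (Or.inr e2)
        omega
      · rw [if_neg e1, if_pos e2]
        have := hkey (Or.inl e1)
        omega
      · -- both miss X : two entering arcs
        rw [if_neg e1, if_neg e2]
        have hnr : ∀ x ∈ X, x ∉ roots B₁ ∪ roots B₂ := by
          intro x hx hmem
          rw [← hcup, mem_union] at hmem
          rcases hmem with h | h
          · exact e1 ⟨x, mem_inter.2 ⟨h, hx⟩⟩
          · exact e2 ⟨x, mem_inter.2 ⟨h, hx⟩⟩
        have hXh1 : ∀ x ∈ X, x ∈ heads B₁ := by
          intro x hx
          by_contra hh
          exact hnr x hx (mem_union_left _ (mem_sdiff.2 ⟨mem_univ _, hh⟩))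
        have hXh2 : ∀ x ∈ X, x ∈ heads B₂ := by
          intro x hx
          by_contra hh
          exact hnr x hx (mem_union_right _ (mem_sdiff.2 ⟨mem_univ _, hh⟩))
        obtain ⟨b1, hb1B, hb12, hb11⟩ := exists_entering h₁ hXne hXh1
        obtain ⟨b2, hb2B, hb22, hb21⟩ := exists_entering h₂ hXne hXh2
        have hne : b1 ≠ b2 := fun h => (Finset.disjoint_left.1 hd hb1B) (h ▸ hb2B)
        have hsubpair : ({b1, b2} : Finset (V × V)) ⊆
            A.filter (fun a => a.2 ∈ X ∧ a.1 ∉ X) := by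
          intro b hb
          rcases mem_insert.1 hb with rfl | hb
          · exact mem_filter.2 ⟨h₁.1 hb1B, hb12, hb11⟩
          · rw [Finset.mem_singleton.1 hb]
            exact mem_filter.2 ⟨h₂.1 hb2B, hb22, hb21⟩
        have := Finset.card_le_card hsubpair
        rw [Finset.card_pair hne] at this
        rw [ent]
        omega
    obtain ⟨B₁', B₂', hs1, hs2, hdisj, hd1, hd2, hn1, hn2, hh1, hh2⟩ :=
      edmonds2 ((univ \ R₁').card + (univ \ R₂').card) A R₁' R₂' le_rfl hcut
    have hroots1 : roots B₁' = R₁' := by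
      rw [roots, hh1, Finset.sdiff_sdiff_self_left, Finset.univ_inter]
    have hroots2 : roots B₂' = R₂' := by
      rw [roots, hh2, Finset.sdiff_sdiff_self_left, Finset.univ_inter]
    have hb1 : IsBranching A B₁' := isBranching_iff.2 ⟨hs1, hd1, hn1⟩
    have hb2 : IsBranching A B₂' := isBranching_iff.2 ⟨hs2, hd2, hn2⟩
    refine ⟨B₁', B₂', hb1, hb2, hdisj, ?_, hroots1, hroots2⟩
    -- cardinality bookkeeping for the union
    apply Finset.eq_of_subset_of_card_le (Finset.union_subset hs1 hs2)
    have e1 : B₁'.card = (univ \ R₁').card := by rw [card_eq_card_heads hd1, hh1]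
    have e2 : B₂'.card = (univ \ R₂').card := by rw [card_eq_card_heads hd2, hh2]
    have e3 : (B₁' ∪ B₂').card = B₁'.card + B₂'.card := card_union_of_disjoint hdisj
    have e4 : A.card = B₁.card + B₂.card := by
      rw [← hu, card_union_of_disjoint hd]
    have e5 : B₁.card = (heads B₁).card := card_eq_card_heads h₁.2.1
    have e6 : B₂.card = (heads B₂).card := card_eq_card_heads h₂.2.1
    have e7 : (roots B₁).card = Fintype.card V - (heads B₁).card := by
      rw [roots, Finset.card_sdiff_of_subset (subset_univ _), Finset.card_univ]
    have e8 : (roots B₂).card = Fintype.card V - (heads B₂).card := by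
      rw [roots, Finset.card_sdiff_of_subset (subset_univ _), Finset.card_univ]
    have e9 : R₁'.card + R₂'.card = (roots B₁).card + (roots B₂).card := by
      have := Finset.card_union_add_card_inter R₁' R₂'
      have h2 := Finset.card_union_add_card_inter (roots B₁) (roots B₂)
      rw [hcup, hcap] at this
      omega
    have e10 : (univ \ R₁').card = Fintype.card V - R₁'.card := by
      rw [Finset.card_sdiff_of_subset (subset_univ _), Finset.card_univ]
    have e11 : (univ \ R₂').card = Fintype.card V - R₂'.card := by
      rw [Finset.card_sdiff_of_subset (subset_univ _), Finset.card_univ]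
    have b1 : (heads B₁).card ≤ Fintype.card V := by
      rw [← Finset.card_univ]
      exact Finset.card_le_card (subset_univ _)
    have b2 : (heads B₂).card ≤ Fintype.card V := by
      rw [← Finset.card_univ]
      exact Finset.card_le_card (subset_univ _)
    have b3 : R₁'.card ≤ Fintype.card V := by
      rw [← Finset.card_univ]
      exact Finset.card_le_card (subset_univ _)
    have b4 : R₂'.card ≤ Fintype.card V := by
      rw [← Finset.card_univ]
      exact Finset.card_le_card (subset_univ _)
    omega
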